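/- Let C₁, C₂ be nonempty closed convex subsets of a finite-dimensional Hilbert space H with C₁ ∩ C₂ ≠ ∅. Define the Douglas–Rachford operator T(z) = z + P_{C₂}(2P_{C₁}(z) − z) − P_{C₁}(z), where P_C denotes metric projection. Then for any initial z₀, the iterates z_{k+1} = T(z_k) converge to a fixed point z* of T, and P_{C₁}(z*) ∈ C₁ ∩ C₂. -/

import Mathlib

open Filter Topology RealInnerProductSpace

section Aux
variable {H : Type*} [NormedAddCommGroup H] [InnerProductSpace ℝ H]

lemma dr_proj_var {C : Set H} (hcv : Convex ℝ C) (P : H → H)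
    (hP : ∀ z, P z ∈ C ∧ ∀ w ∈ C, ‖z - P z‖ ≤ ‖z - w‖) :
    ∀ z, ∀ w ∈ C, ⟪z - P z, w - P z⟫ ≤ 0 := by
  intro z
  haveI : Nonempty C := ⟨⟨P z, (hP z).1⟩⟩
  have hinf : ‖z - P z‖ = ⨅ w : C, ‖z - w‖ := by
    apply le_antisymm
    · exact le_ciInf fun w => (hP z).2 w w.2
    · have hbdd : BddBelow (Set.range fun w : C => ‖z - w‖) := by
        refine ⟨0, ?_⟩
        rintro x ⟨w, rfl⟩
        exact norm_nonneg _
      exact ciInf_le hbdd (⟨P z, (hP z).1⟩ : C)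
  exact (norm_eq_iInf_iff_real_inner_le_zero hcv (hP z).1).1 hinf

lemma dr_proj_mono {C : Set H} (hcv : Convex ℝ C) (P : H → H)
    (hP : ∀ z, P z ∈ C ∧ ∀ w ∈ C, ‖z - P z‖ ≤ ‖z - w‖) (x y : H) :
    ‖P x - P y‖ ^ 2 ≤ ⟪x - y, P x - P y⟫ := by
  have h1 := dr_proj_var hcv P hP x (P y) (hP y).1
  have h2 := dr_proj_var hcv P hP y (P x) (hP x).1
  have hn : ⟪P x - P y, P x - P y⟫ = ‖P x - P y‖ ^ 2 := real_inner_self_eq_norm_sq _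
  simp only [inner_sub_left, inner_sub_right] at h1 h2 hn ⊢
  nlinarith [real_inner_comm (P x) (P y), real_inner_comm x (P y), real_inner_comm y (P x)]

lemma dr_proj_nonexp {C : Set H} (hcv : Convex ℝ C) (P : H → H)
    (hP : ∀ z, P z ∈ C ∧ ∀ w ∈ C, ‖z - P z‖ ≤ ‖z - w‖) (x y : H) :
    ‖P x - P y‖ ≤ ‖x - y‖ := by
  have h := dr_proj_mono hcv P hP x y
  have h2 := real_inner_le_norm (x - y) (P x - P y)
  nlinarith [norm_nonneg (P x - P y), norm_nonneg (x - y)]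

lemma dr_reflect_nonexp {C : Set H} (hcv : Convex ℝ C) (P : H → H)
    (hP : ∀ z, P z ∈ C ∧ ∀ w ∈ C, ‖z - P z‖ ≤ ‖z - w‖) (x y : H) :
    ‖(2 • P x - x) - (2 • P y - y)‖ ≤ ‖x - y‖ := by
  have h := dr_proj_mono hcv P hP x y
  have key : (2 • P x - x) - (2 • P y - y) = (2:ℝ) • (P x - P y) - (x - y) := by
    push_cast [two_smul]; abel
  rw [key]
  have hkey : ⟪(2:ℝ) • (P x - P y), x - y⟫ = 2 * ⟪x - y, P x - P y⟫ := by
    rw [real_inner_smul_left, real_inner_comm]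
  have hsq : ‖(2:ℝ) • (P x - P y) - (x - y)‖ ^ 2 ≤ ‖x - y‖ ^ 2 := by
    rw [norm_sub_sq_real, hkey, norm_smul, Real.norm_ofNat]
    nlinarith [norm_nonneg (P x - P y)]
  nlinarith [norm_nonneg ((2:ℝ) • (P x - P y) - (x - y)), norm_nonneg (x - y)]

lemma dr_avg_ineq (a b : H) (hb : ‖b‖ ≤ ‖a‖) :
    ‖(2:ℝ)⁻¹ • (a + b)‖ ^ 2 + ‖(2:ℝ)⁻¹ • (a - b)‖ ^ 2 ≤ ‖a‖ ^ 2 := by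
  have h1 : ‖a + b‖ ^ 2 = ‖a‖^2 + 2 * ⟪a, b⟫ + ‖b‖^2 := norm_add_sq_real a b
  have h2 : ‖a - b‖ ^ 2 = ‖a‖^2 - 2 * ⟪a, b⟫ + ‖b‖^2 := norm_sub_sq_real a b
  have e1 : ‖(2:ℝ)⁻¹ • (a + b)‖ = (2:ℝ)⁻¹ * ‖a + b‖ := by
    rw [norm_smul]; norm_num
  have e2 : ‖(2:ℝ)⁻¹ • (a - b)‖ = (2:ℝ)⁻¹ * ‖a - b‖ := by
    rw [norm_smul]; norm_num
  rw [e1, e2]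
  nlinarith [norm_nonneg a, norm_nonneg b]

end Aux
/-- Douglas–Rachford convergence: for nonempty closed convex sets `C₁, C₂`
with nonempty intersection in a finite-dimensional real Hilbert space, the
DR iterates converge to a fixed point `z*` of the DR operator, and
`P_{C₁}(z*) ∈ C₁ ∩ C₂`. The projections are characterized as nearest-point maps. -/
theorem douglas_rachford_convergence
    {H : Type*} [NormedAddCommGroup H] [InnerProductSpace ℝ H]
    [FiniteDimensional ℝ H]
    (C₁ C₂ : Set H)
    (h₁ne : C₁.Nonempty) (h₁cl : IsClosed C₁) (h₁cv : Convex ℝ C₁)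
    (h₂ne : C₂.Nonempty) (h₂cl : IsClosed C₂) (h₂cv : Convex ℝ C₂)
    (hint : (C₁ ∩ C₂).Nonempty)
    (P₁ P₂ : H → H)
    (hP₁ : ∀ z, P₁ z ∈ C₁ ∧ ∀ w ∈ C₁, ‖z - P₁ z‖ ≤ ‖z - w‖)
    (hP₂ : ∀ z, P₂ z ∈ C₂ ∧ ∀ w ∈ C₂, ‖z - P₂ z‖ ≤ ‖z - w‖) :
    let T : H → H := fun z => z + P₂ (2 • P₁ z - z) - P₁ z
    ∀ z₀ : H, ∃ zstar : H,
      T zstar = zstar ∧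
      Tendsto (fun k => T^[k] z₀) atTop (𝓝 zstar) ∧
      P₁ zstar ∈ C₁ ∩ C₂ := by
  intro T z₀
  have hT : ∀ z, T z = z + P₂ (2 • P₁ z - z) - P₁ z := fun z => rfl
  -- fixed points of projections
  have hfix : ∀ (P : H → H) (C : Set H),
      (∀ z, P z ∈ C ∧ ∀ w ∈ C, ‖z - P z‖ ≤ ‖z - w‖) → ∀ w ∈ C, P w = w := by
    intro P C hP w hw
    have h := (hP w).2 w hw
    rw [sub_self, norm_zero] at h
    have h0 : w - P w = 0 := norm_le_zero_iff.1 h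
    exact (sub_eq_zero.1 h0).symm
  -- the "reflect-reflect" operator
  set N : H → H := fun z => 2 • P₂ (2 • P₁ z - z) - (2 • P₁ z - z) with hNdef
  have hN : ∀ x y, ‖N x - N y‖ ≤ ‖x - y‖ := by
    intro x y
    calc ‖N x - N y‖
        ≤ ‖(2 • P₁ x - x) - (2 • P₁ y - y)‖ :=
          dr_reflect_nonexp h₂cv P₂ hP₂ (2 • P₁ x - x) (2 • P₁ y - y)
      _ ≤ ‖x - y‖ := dr_reflect_nonexp h₁cv P₁ hP₁ x y
  have hTN : ∀ z, z + N z = T z + T z := by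
    intro z
    rw [hT z, hNdef]
    simp only [two_smul]
    abel
  -- key firmly-nonexpansive inequality
  have key : ∀ x y, T y = y → ‖T x - y‖ ^ 2 + ‖T x - x‖ ^ 2 ≤ ‖x - y‖ ^ 2 := by
    intro x y hy
    have hNy : N y = y := by
      have h := hTN y
      rw [hy] at h
      exact add_left_cancel h
    have hb : ‖N x - y‖ ≤ ‖x - y‖ := by
      have := hN x y; rwa [hNy] at this
    have ha1 : T x - y = (2:ℝ)⁻¹ • ((x - y) + (N x - y)) := by
      have h2 : (2:ℝ) • (T x - y) = (x - y) + (N x - y) := by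
        rw [two_smul]
        have h3 : (x - y) + (N x - y) = (x + N x) - (y + y) := by abel
        rw [h3, hTN x]; abel
      rw [← h2, smul_smul]; norm_num
    have ha2 : T x - x = (2:ℝ)⁻¹ • ((N x - y) - (x - y)) := by
      have h2 : (2:ℝ) • (T x - x) = (N x - y) - (x - y) := by
        rw [two_smul]
        have h3 : (N x - y) - (x - y) = (x + N x) - (x + x) := by abel
        rw [h3, hTN x]; abel
      rw [← h2, smul_smul]; norm_num
    have havg := dr_avg_ineq (x - y) (N x - y) hb
    rw [ha1, ha2]
    have hrev : ‖(2:ℝ)⁻¹ • ((N x - y) - (x - y))‖ = ‖(2:ℝ)⁻¹ • ((x - y) - (N x - y))‖ := by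
      rw [show (N x - y - (x - y)) = -((x - y) - (N x - y)) by abel, smul_neg, norm_neg]
    rw [hrev]
    exact havg
  -- a common fixed point from the intersection
  obtain ⟨y₀, hy₀1, hy₀2⟩ := hint
  have hTy₀ : T y₀ = y₀ := by
    rw [hT y₀, hfix P₁ C₁ hP₁ y₀ hy₀1]
    have h2 : (2:ℕ) • y₀ - y₀ = y₀ := by rw [two_smul]; abel
    rw [h2, hfix P₂ C₂ hP₂ y₀ hy₀2]
    abel
  -- the iterates
  set z : ℕ → H := fun k => T^[k] z₀ with hzdef
  have hz : ∀ k, z (k + 1) = T (z k) := fun k => Function.iterate_succ_apply' T k z₀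
  have hfej : ∀ y, T y = y → ∀ k,
      ‖z (k + 1) - y‖ ^ 2 + ‖z (k + 1) - z k‖ ^ 2 ≤ ‖z k - y‖ ^ 2 := by
    intro y hy k
    rw [hz k]
    exact key (z k) y hy
  have hmono : ∀ y, T y = y → Antitone fun k => ‖z k - y‖ := by
    intro y hy
    apply antitone_nat_of_succ_le
    intro k
    have h := hfej y hy k
    nlinarith [norm_nonneg (z (k + 1) - y), norm_nonneg (z k - y),
      sq_nonneg ‖z (k + 1) - z k‖, sq_nonneg (‖z (k + 1) - y‖ + ‖z k - y‖)]
  -- the squared distances to y₀ converge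
  have hd_anti : Antitone fun k => ‖z k - y₀‖ ^ 2 := by
    intro m n h
    exact pow_le_pow_left₀ (norm_nonneg _) (hmono y₀ hTy₀ h) 2
  have hL : Tendsto (fun k => ‖z k - y₀‖ ^ 2) atTop (𝓝 (⨅ k, ‖z k - y₀‖ ^ 2)) := by
    apply tendsto_atTop_ciInf hd_anti
    refine ⟨0, ?_⟩
    rintro x ⟨k, rfl⟩
    positivity
  have hL' : Tendsto (fun k => ‖z (k + 1) - y₀‖ ^ 2) atTop (𝓝 (⨅ k, ‖z k - y₀‖ ^ 2)) :=
    hL.comp (tendsto_add_atTop_nat 1)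
  -- asymptotic regularity
  have hstep0 : Tendsto (fun k => ‖z (k + 1) - z k‖ ^ 2) atTop (𝓝 0) := by
    have h1 := hL.sub hL'
    rw [sub_self] at h1
    refine squeeze_zero (fun k => sq_nonneg _) (fun k => ?_) h1
    have := hfej y₀ hTy₀ k
    linarith
  have hstep : Tendsto (fun k => ‖z (k + 1) - z k‖) atTop (𝓝 0) := by
    have h := hstep0.sqrt
    simpa [Real.sqrt_sq_eq_abs, abs_norm, Real.sqrt_zero] using h
  -- boundedness and a convergent subsequence
  have hball : ∀ k, z k ∈ Metric.closedBall y₀ ‖z₀ - y₀‖ := by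
    intro k
    rw [Metric.mem_closedBall, dist_eq_norm]
    have := hmono y₀ hTy₀ (Nat.zero_le k)
    exact this
  obtain ⟨zs, _, φ, hφ, hφtend⟩ :=
    (isCompact_closedBall y₀ ‖z₀ - y₀‖).tendsto_subseq hball
  -- T is continuous
  have hc₁ : Continuous P₁ := by
    have : LipschitzWith 1 P₁ := by
      apply LipschitzWith.of_dist_le_mul
      intro x y
      rw [NNReal.coe_one, one_mul, dist_eq_norm, dist_eq_norm]
      exact dr_proj_nonexp h₁cv P₁ hP₁ x y
    exact this.continuous
  have hc₂ : Continuous P₂ := by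
    have : LipschitzWith 1 P₂ := by
      apply LipschitzWith.of_dist_le_mul
      intro x y
      rw [NNReal.coe_one, one_mul, dist_eq_norm, dist_eq_norm]
      exact dr_proj_nonexp h₂cv P₂ hP₂ x y
    exact this.continuous
  have hR₁ : Continuous fun w : H => 2 • P₁ w - w := by
    have h : Continuous fun w : H => (P₁ w + P₁ w) - w := (hc₁.add hc₁).sub continuous_id
    exact h.congr fun w => by rw [two_smul]
  have hTc : Continuous T := by
    show Continuous fun w => w + P₂ (2 • P₁ w - w) - P₁ w
    exact (continuous_id.add (hc₂.comp hR₁)).sub hc₁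
  -- zs is a fixed point of T
  have h0 : Tendsto (fun k => T (z k) - z k) atTop (𝓝 0) := by
    rw [tendsto_zero_iff_norm_tendsto_zero]
    exact hstep.congr fun k => by rw [hz k]
  have hTz : Tendsto (fun j => T (z (φ j)) - z (φ j)) atTop (𝓝 (T zs - zs)) :=
    ((hTc.tendsto zs).comp hφtend).sub hφtend
  have hfixzs : T zs = zs := by
    have h2 := tendsto_nhds_unique hTz (h0.comp hφ.tendsto_atTop)
    rwa [sub_eq_zero] at h2
  -- full convergence to zs
  have hanti2 : Antitone fun k => ‖z k - zs‖ := hmono zs hfixzs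
  have hsub0 : Tendsto (fun j => ‖z (φ j) - zs‖) atTop (𝓝 0) :=
    tendsto_iff_norm_sub_tendsto_zero.1 hφtend
  have hiInf : Tendsto (fun k => ‖z k - zs‖) atTop (𝓝 (⨅ k, ‖z k - zs‖)) := by
    apply tendsto_atTop_ciInf hanti2
    refine ⟨0, ?_⟩
    rintro x ⟨k, rfl⟩
    positivity
  have hinf0 : (⨅ k, ‖z k - zs‖) = 0 :=
    tendsto_nhds_unique (hiInf.comp hφ.tendsto_atTop) hsub0
  rw [hinf0] at hiInf
  refine ⟨zs, hfixzs, tendsto_iff_norm_sub_tendsto_zero.2 hiInf, ?_⟩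
  -- P₁ zs ∈ C₁ ∩ C₂
  have h := hfixzs
  rw [hT zs, add_sub_assoc] at h
  have h2 : P₂ (2 • P₁ zs - zs) - P₁ zs = 0 := add_eq_left.1 h
  have h3 : P₂ (2 • P₁ zs - zs) = P₁ zs := sub_eq_zero.1 h2
  exact ⟨(hP₁ zs).1, h3 ▸ (hP₂ (2 • P₁ zs - zs)).1⟩
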